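/- Let L be the subgroup of GL₄(ℚ) generated by the four matrices D₁, D₂, M, E (the two Dehn-twist operators and the m-loop and e-loop operators of the toric code on the torus, in the skein basis). Then L equals the set of all 4×4 signed permutation matrices with an even number of −1 entries; that is, L = { A : there exist σ ∈ Equiv.Perm (Fin 4) and ε : Fin 4 → {1,−1} with ε₀·ε₁·ε₂·ε₃ = 1 such that A i j = ε i if j = σ i and A i j = 0 otherwise }. In particular L has order 192. -/

import Mathlib

/-- First Dehn twist operator on the toric-code ground space (skein basis). -/
def dehn₁ : Matrix (Fin 4) (Fin 4) ℚ := !![1,0,0,0; 0,1,0,0; 0,0,0,1; 0,0,1,0]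

/-- Second Dehn twist operator. -/
def dehn₂ : Matrix (Fin 4) (Fin 4) ℚ := !![1,0,0,0; 0,0,1,0; 0,1,0,0; 0,0,0,1]

/-- Horizontal `m`-anyon loop operator. -/
def mLoop : Matrix (Fin 4) (Fin 4) ℚ := !![0,1,0,0; 1,0,0,0; 0,0,0,1; 0,0,1,0]

/-- Horizontal `e`-anyon loop operator. -/
def eLoop : Matrix (Fin 4) (Fin 4) ℚ := !![1,0,0,0; 0,1,0,0; 0,0,-1,0; 0,0,0,-1]

lemma dehn₁_sq : dehn₁ * dehn₁ = 1 := by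
  ext i j
  fin_cases i <;> fin_cases j <;>
    norm_num [dehn₁, Matrix.mul_apply, Fin.sum_univ_four, Matrix.one_apply,
      Matrix.vecHead, Matrix.vecTail, Fin.ext_iff] <;> simp

lemma dehn₂_sq : dehn₂ * dehn₂ = 1 := by
  ext i j
  fin_cases i <;> fin_cases j <;>
    norm_num [dehn₂, Matrix.mul_apply, Fin.sum_univ_four, Matrix.one_apply,
      Matrix.vecHead, Matrix.vecTail, Fin.ext_iff] <;> simp

lemma mLoop_sq : mLoop * mLoop = 1 := by
  ext i j
  fin_cases i <;> fin_cases j <;>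
    norm_num [mLoop, Matrix.mul_apply, Fin.sum_univ_four, Matrix.one_apply,
      Matrix.vecHead, Matrix.vecTail, Fin.ext_iff] <;> simp

lemma eLoop_sq : eLoop * eLoop = 1 := by
  ext i j
  fin_cases i <;> fin_cases j <;>
    norm_num [eLoop, Matrix.mul_apply, Fin.sum_univ_four, Matrix.one_apply,
      Matrix.vecHead, Matrix.vecTail, Fin.ext_iff] <;> simp

/-- `D₁` as an element of `GL₄(ℚ)`. -/
def D₁ : GL (Fin 4) ℚ := ⟨dehn₁, dehn₁, dehn₁_sq, dehn₁_sq⟩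

/-- `D₂` as an element of `GL₄(ℚ)`. -/
def D₂ : GL (Fin 4) ℚ := ⟨dehn₂, dehn₂, dehn₂_sq, dehn₂_sq⟩

/-- `M` as an element of `GL₄(ℚ)`. -/
def M : GL (Fin 4) ℚ := ⟨mLoop, mLoop, mLoop_sq, mLoop_sq⟩

/-- `E` as an element of `GL₄(ℚ)`. -/
def E : GL (Fin 4) ℚ := ⟨eLoop, eLoop, eLoop_sq, eLoop_sq⟩

/-- The subgroup of `GL₄(ℚ)` generated by the two Dehn twists and the two anyon loops. -/
def L : Subgroup (GL (Fin 4) ℚ) := Subgroup.closure {D₁, D₂, M, E}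
open Equiv

def Signed (A : GL (Fin 4) ℚ) : Prop :=
  ∃ (σ : Equiv.Perm (Fin 4)) (ε : Fin 4 → ℚ),
    (∀ i, ε i = 1 ∨ ε i = -1) ∧
    ε 0 * ε 1 * ε 2 * ε 3 = 1 ∧
    (∀ i j, (A : Matrix (Fin 4) (Fin 4) ℚ) i j = if j = σ i then ε i else 0)

def K : Subgroup (GL (Fin 4) ℚ) where
  carrier := {A | Signed A}
  one_mem' := ⟨1, fun _ => 1, fun _ => Or.inl rfl, by norm_num, by
    intro i j; simp [Matrix.one_apply, eq_comm]⟩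
  mul_mem' := by
    rintro A B ⟨σ, ε, hε, hπ, hA⟩ ⟨τ, δ, hδ, hπ', hB⟩
    refine ⟨τ * σ, fun i => ε i * δ (σ i), fun i => ?_, ?_, fun i j => ?_⟩
    · rcases hε i with h | h <;> rcases hδ (σ i) with h' | h' <;> simp [h, h']
    · have h4 : ∀ f : Fin 4 → ℚ, f 0 * f 1 * f 2 * f 3 = ∏ i, f i := by
        intro f; rw [Fin.prod_univ_four]
      have : (∏ i, ε i * δ (σ i)) = (∏ i, ε i) * ∏ i, δ (σ i) := Finset.prod_mul_distrib
      rw [← Fin.prod_univ_four (fun i => ε i * δ (σ i)), this, Equiv.prod_comp σ δ,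
        ← h4 ε, ← h4 δ, hπ, hπ', one_mul]
    · show (A.val * B.val) i j = _
      rw [Matrix.mul_apply]
      simp only [hA, hB, ite_mul, zero_mul, Finset.sum_ite_eq', Finset.mem_univ, if_true,
        Perm.mul_apply]
      rcases hε i with h | h <;> simp [h, mul_comm]
  inv_mem' := by
    rintro A ⟨σ, ε, hε, hπ, hA⟩
    have hsq : ∀ i, ε i * ε i = 1 := by
      intro i; rcases hε i with h | h <;> simp [h]
    have hAB : A.val * (Matrix.of fun i j => if j = σ⁻¹ i then ε (σ⁻¹ i) else 0 : Matrix (Fin 4) (Fin 4) ℚ) = 1 := by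
      ext i j
      rw [Matrix.mul_apply, Finset.sum_eq_single (σ i)]
      · simp only [hA, if_pos rfl, Matrix.of_apply, Equiv.Perm.coe_inv, Equiv.symm_apply_apply, Matrix.one_apply]
        rcases eq_or_ne i j with rfl | h
        · simp [hsq]
        · simp [h, h.symm]
      · intro b _ hb
        simp [hA, hb]
      · simp
    have hinv : (A⁻¹).val = (Matrix.of fun i j => if j = σ⁻¹ i then ε (σ⁻¹ i) else 0 : Matrix (Fin 4) (Fin 4) ℚ) :=
      Units.inv_eq_of_mul_eq_one_right hAB
    refine ⟨σ⁻¹, fun i => ε (σ⁻¹ i), fun i => hε _, ?_, fun i j => by rw [hinv]; rfl⟩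
    have h4 : ∀ f : Fin 4 → ℚ, f 0 * f 1 * f 2 * f 3 = ∏ i, f i := by
      intro f; rw [Fin.prod_univ_four]
    rw [← Fin.prod_univ_four (fun i => ε (σ⁻¹ i)), Equiv.prod_comp σ⁻¹ ε, ← h4 ε, hπ]
def pmat (σ : Equiv.Perm (Fin 4)) : Matrix (Fin 4) (Fin 4) ℚ := fun i j => if j = σ i then 1 else 0

lemma pmat_mul (σ τ : Equiv.Perm (Fin 4)) : pmat σ * pmat τ = pmat (τ * σ) := by
  ext i j
  rw [Matrix.mul_apply]
  simp only [pmat, ite_mul, one_mul, zero_mul, Finset.sum_ite_eq', Finset.mem_univ, if_true,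
    Perm.mul_apply]
  rfl

lemma pmat_one : pmat 1 = 1 := by
  ext i j
  simp [pmat, Matrix.one_apply, eq_comm]

def P (σ : Equiv.Perm (Fin 4)) : GL (Fin 4) ℚ :=
  ⟨pmat σ⁻¹, pmat σ, by rw [pmat_mul, mul_inv_cancel, pmat_one], by rw [pmat_mul, inv_mul_cancel, pmat_one]⟩

lemma P_mul (σ τ : Equiv.Perm (Fin 4)) : P (σ * τ) = P σ * P τ := by
  apply Units.ext
  show pmat (σ*τ)⁻¹ = pmat σ⁻¹ * pmat τ⁻¹
  rw [pmat_mul, mul_inv_rev]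

lemma D₁_mem : D₁ ∈ K := by
  refine ⟨Equiv.swap 2 3, 1, fun i => Or.inl rfl, by norm_num, fun i j => ?_⟩
  show dehn₁ i j = _
  fin_cases i <;> fin_cases j <;> decide

lemma D₂_mem : D₂ ∈ K := by
  refine ⟨Equiv.swap 1 2, 1, fun i => Or.inl rfl, by norm_num, fun i j => ?_⟩
  show dehn₂ i j = _
  fin_cases i <;> fin_cases j <;> decide

lemma M_mem : M ∈ K := by
  refine ⟨Equiv.swap 0 1 * Equiv.swap 2 3, 1, fun i => Or.inl rfl, by norm_num, fun i j => ?_⟩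
  show mLoop i j = _
  fin_cases i <;> fin_cases j <;> decide

lemma E_mem : E ∈ K := by
  refine ⟨1, ![1,1,-1,-1], fun i => by fin_cases i <;> norm_num, by norm_num <;> simp, fun i j => ?_⟩
  show eLoop i j = _
  fin_cases i <;> fin_cases j <;> decide

lemma L_le_K : L ≤ K := by
  refine (Subgroup.closure_le K).2 ?_
  rintro A h
  simp only [Set.mem_insert_iff, Set.mem_singleton_iff] at h
  rcases h with rfl | rfl | rfl | rfl
  exacts [D₁_mem, D₂_mem, M_mem, E_mem]

lemma hD₁L : D₁ ∈ L := Subgroup.subset_closure (by simp)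
lemma hD₂L : D₂ ∈ L := Subgroup.subset_closure (by simp)
lemma hML : M ∈ L := Subgroup.subset_closure (by simp)
lemma hEL : E ∈ L := Subgroup.subset_closure (by simp)

lemma P_one : P 1 = 1 := by
  apply Units.ext
  show pmat (1 : Perm (Fin 4))⁻¹ = 1
  rw [inv_one, pmat_one]

def T : Submonoid (Perm (Fin 4)) where
  carrier := {σ | P σ ∈ L}
  one_mem' := by show P 1 ∈ L; rw [P_one]; exact one_mem L
  mul_mem' := by
    intro σ τ hσ hτ
    show P (σ * τ) ∈ L
    rw [P_mul]
    exact mul_mem hσ hτ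

lemma P_mem_L (σ : Perm (Fin 4)) : P σ ∈ L := by
  have h : σ ∈ Submonoid.closure (Set.range fun i : Fin 3 => Equiv.swap i.castSucc i.succ) := by
    rw [Equiv.Perm.mclosure_swap_castSucc_succ]; trivial
  have hle : Submonoid.closure (Set.range fun i : Fin 3 => Equiv.swap i.castSucc i.succ) ≤ T := by
    rw [Submonoid.closure_le]
    rintro _ ⟨i, rfl⟩
    fin_cases i
    · -- swap 0 1 : P = M * D₁
      show P (Equiv.swap ((0:Fin 3).castSucc) ((0:Fin 3).succ)) ∈ L
      have : P (Equiv.swap ((0:Fin 3).castSucc) ((0:Fin 3).succ)) = M * D₁ := by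
        apply Units.ext
        show pmat _ = mLoop * dehn₁
        ext i j
        fin_cases i <;> fin_cases j <;>
          norm_num [pmat, Matrix.mul_apply, Fin.sum_univ_four, mLoop, dehn₁,
            Equiv.swap_inv, Equiv.swap_apply_def, Fin.ext_iff, Matrix.vecHead, Matrix.vecTail] <;> simp
      rw [this]; exact mul_mem hML hD₁L
    · show P (Equiv.swap ((1:Fin 3).castSucc) ((1:Fin 3).succ)) ∈ L
      have : P (Equiv.swap ((1:Fin 3).castSucc) ((1:Fin 3).succ)) = D₂ := by
        apply Units.ext
        show pmat _ = dehn₂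
        ext i j
        fin_cases i <;> fin_cases j <;>
          norm_num [pmat, dehn₂, Equiv.swap_inv, Equiv.swap_apply_def, Fin.ext_iff,
            Matrix.vecHead, Matrix.vecTail] <;> simp
      rw [this]; exact hD₂L
    · show P (Equiv.swap ((2:Fin 3).castSucc) ((2:Fin 3).succ)) ∈ L
      have : P (Equiv.swap ((2:Fin 3).castSucc) ((2:Fin 3).succ)) = D₁ := by
        apply Units.ext
        show pmat _ = dehn₁
        ext i j
        fin_cases i <;> fin_cases j <;>
          norm_num [pmat, dehn₁, Equiv.swap_inv, Equiv.swap_apply_def, Fin.ext_iff,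
            Matrix.vecHead, Matrix.vecTail] <;> simp
      rw [this]; exact hD₁L
  exact hle h

lemma wE : eLoop = Matrix.diagonal ![1, 1, -1, -1] := by
  ext i j; fin_cases i <;> fin_cases j <;>
    norm_num [eLoop, Matrix.diagonal_apply, Fin.ext_iff, Matrix.vecHead, Matrix.vecTail]

lemma wA : dehn₂ * eLoop * dehn₂ = Matrix.diagonal ![1, -1, 1, -1] := by
  ext i j; fin_cases i <;> fin_cases j <;>
    norm_num [dehn₂, eLoop, Matrix.mul_apply, Fin.sum_univ_four, Matrix.diagonal_apply,
      Fin.ext_iff, Matrix.vecHead, Matrix.vecTail] <;> simp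

lemma wB : mLoop * Matrix.diagonal ![1, -1, 1, -1] * mLoop = Matrix.diagonal ![-1, 1, -1, 1] := by
  ext i j; fin_cases i <;> fin_cases j <;>
    norm_num [mLoop, Matrix.mul_apply, Fin.sum_univ_four, Matrix.diagonal_apply,
      Fin.ext_iff, Matrix.vecHead, Matrix.vecTail, Matrix.vecMul, dotProduct] <;> simp <;> norm_num

lemma ddiag (a b : Fin 4 → ℚ) :
    Matrix.diagonal a * Matrix.diagonal b = Matrix.diagonal (fun i => a i * b i) :=
  Matrix.diagonal_mul_diagonal a b

lemma diag_exists (ε : Fin 4 → ℚ) (hε : ∀ i, ε i = 1 ∨ ε i = -1)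
    (hπ : ε 0 * ε 1 * ε 2 * ε 3 = 1) :
    ∃ u ∈ L, (u : Matrix (Fin 4) (Fin 4) ℚ) = Matrix.diagonal ε := by
  have key : ∀ (a b c d : ℚ), ε = ![a, b, c, d] →
      (∃ u ∈ L, (u : Matrix (Fin 4) (Fin 4) ℚ) = Matrix.diagonal ![a, b, c, d]) →
      ∃ u ∈ L, (u : Matrix (Fin 4) (Fin 4) ℚ) = Matrix.diagonal ε := by
    rintro a b c d rfl h; exact h
  have efun : ε = ![ε 0, ε 1, ε 2, ε 3] := by
    funext i; fin_cases i <;> rfl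
  have hABL : D₂ * E * D₂ ∈ L := mul_mem (mul_mem hD₂L hEL) hD₂L
  have hBL : M * (D₂ * E * D₂) * M ∈ L := mul_mem (mul_mem hML hABL) hML
  have hBval : (M * (D₂ * E * D₂) * M).val = Matrix.diagonal ![-1, 1, -1, 1] := by
    show mLoop * (dehn₂ * eLoop * dehn₂) * mLoop = _
    rw [wA, wB]
  have dd : ∀ (a b c d a' b' c' d' : ℚ),
      Matrix.diagonal ![a,b,c,d] * Matrix.diagonal ![a',b',c',d'] =
        Matrix.diagonal ![a*a', b*b', c*c', d*d'] := by
    intro a b c d a' b' c' d'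
    rw [ddiag]; exact congrArg _ (by funext i; fin_cases i <;> rfl)
  rcases hε 0 with h0 | h0 <;> rcases hε 1 with h1 | h1 <;> rcases hε 2 with h2 | h2 <;>
      rcases hε 3 with h3 | h3 <;>
    rw [h0, h1, h2, h3] at efun <;>
    [skip; (rw [h0,h1,h2,h3] at hπ; norm_num at hπ);
     (rw [h0,h1,h2,h3] at hπ; norm_num at hπ); skip;
     (rw [h0,h1,h2,h3] at hπ; norm_num at hπ); skip; skip;
     (rw [h0,h1,h2,h3] at hπ; norm_num at hπ);
     (rw [h0,h1,h2,h3] at hπ; norm_num at hπ); skip; skip;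
     (rw [h0,h1,h2,h3] at hπ; norm_num at hπ); skip;
     (rw [h0,h1,h2,h3] at hπ; norm_num at hπ);
     (rw [h0,h1,h2,h3] at hπ; norm_num at hπ); skip]
  · -- (1,1,1,1)
    refine key _ _ _ _ efun ⟨1, one_mem L, ?_⟩
    show (1 : Matrix (Fin 4) (Fin 4) ℚ) = _
    ext i j; fin_cases i <;> fin_cases j <;>
      norm_num [Matrix.one_apply, Matrix.diagonal_apply, Fin.ext_iff]
  · -- (1,1,-1,-1) : E
    exact key _ _ _ _ efun ⟨E, hEL, wE⟩
  · -- (1,-1,1,-1) : D₂*E*D₂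
    refine key _ _ _ _ efun ⟨D₂ * E * D₂, hABL, ?_⟩
    show dehn₂ * eLoop * dehn₂ = _
    exact wA
  · -- (1,-1,-1,1) : E*(D₂*E*D₂)
    refine key _ _ _ _ efun ⟨E * (D₂ * E * D₂), mul_mem hEL hABL, ?_⟩
    show eLoop * (dehn₂ * eLoop * dehn₂) = _
    rw [wA, wE, dd]; norm_num
  · -- (-1,1,1,-1) : E*(M*(D₂*E*D₂)*M)
    refine key _ _ _ _ efun ⟨E * (M * (D₂ * E * D₂) * M), mul_mem hEL hBL, ?_⟩
    show eLoop * (mLoop * (dehn₂ * eLoop * dehn₂) * mLoop) = _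
    show eLoop * (M * (D₂ * E * D₂) * M).val = _
    rw [hBval, wE, dd]; norm_num
  · -- (-1,1,-1,1) : M*(D₂*E*D₂)*M
    exact key _ _ _ _ efun ⟨M * (D₂ * E * D₂) * M, hBL, hBval⟩
  · -- (-1,-1,1,1) : E*((D₂*E*D₂)*(M*(D₂*E*D₂)*M))
    refine key _ _ _ _ efun ⟨E * ((D₂ * E * D₂) * (M * (D₂ * E * D₂) * M)),
      mul_mem hEL (mul_mem hABL hBL), ?_⟩
    show eLoop * ((dehn₂ * eLoop * dehn₂) * (M * (D₂ * E * D₂) * M).val) = _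
    rw [hBval, wA, wE, dd, dd]; norm_num
  · -- (-1,-1,-1,-1) : (D₂*E*D₂)*(M*(D₂*E*D₂)*M)
    refine key _ _ _ _ efun ⟨(D₂ * E * D₂) * (M * (D₂ * E * D₂) * M), mul_mem hABL hBL, ?_⟩
    show (dehn₂ * eLoop * dehn₂) * (M * (D₂ * E * D₂) * M).val = _
    rw [hBval, wA, dd]; norm_num

lemma K_le_L : K ≤ L := by
  rintro A ⟨σ, ε, hε, hπ, hA⟩
  obtain ⟨u, huL, huv⟩ := diag_exists ε hε hπ
  have : A = u * P σ⁻¹ := by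
    apply Units.ext
    show A.val = u.val * pmat σ⁻¹⁻¹
    rw [huv, inv_inv]
    ext i j
    rw [hA]
    simp [Matrix.diagonal_mul, pmat, mul_ite]
  rw [this]
  exact mul_mem huL (P_mem_L σ⁻¹)

lemma mem_L_iff (A : GL (Fin 4) ℚ) : A ∈ L ↔ Signed A :=
  ⟨fun h => L_le_K h, fun h => K_le_L h⟩

def smat (σ : Equiv.Perm (Fin 4)) (ε : Fin 4 → ℚ) : Matrix (Fin 4) (Fin 4) ℚ :=
  Matrix.of fun i j => if j = σ i then ε i else 0

lemma smat_mul (σ : Equiv.Perm (Fin 4)) (ε : Fin 4 → ℚ) (hsq : ∀ i, ε i * ε i = 1) :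
    smat σ ε * smat σ⁻¹ (fun i => ε (σ⁻¹ i)) = 1 := by
  ext i j
  rw [Matrix.mul_apply, Finset.sum_eq_single (σ i)]
  · simp only [smat, Matrix.of_apply, if_pos rfl, Equiv.Perm.coe_inv, Equiv.symm_apply_apply, Matrix.one_apply]
    rcases eq_or_ne i j with rfl | h
    · simp [hsq]
    · simp [h, h.symm]
  · intro b _ hb
    simp [smat, hb]
  · simp

lemma smat_mul' (σ : Equiv.Perm (Fin 4)) (ε : Fin 4 → ℚ) (hsq : ∀ i, ε i * ε i = 1) :
    smat σ⁻¹ (fun i => ε (σ⁻¹ i)) * smat σ ε = 1 := by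
  have := smat_mul σ⁻¹ (fun i => ε (σ⁻¹ i)) (fun i => hsq _)
  rw [inv_inv] at this
  convert this using 2
  funext i j
  simp [smat]

def Vt : Type := {ε : Fin 4 → ℚ // (∀ i, ε i = 1 ∨ ε i = -1) ∧ ε 0 * ε 1 * ε 2 * ε 3 = 1}

lemma Vt_sq (ε : Vt) : ∀ i, ε.1 i * ε.1 i = 1 := by
  intro i; rcases ε.2.1 i with h | h <;> rw [h] <;> norm_num

def gfun (p : Equiv.Perm (Fin 4) × Vt) : L :=
  ⟨⟨smat p.1 p.2.1, smat p.1⁻¹ (fun i => p.2.1 (p.1⁻¹ i)),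
      smat_mul p.1 p.2.1 (Vt_sq p.2), smat_mul' p.1 p.2.1 (Vt_sq p.2)⟩,
    K_le_L ⟨p.1, p.2.1, p.2.2.1, p.2.2.2, fun i j => rfl⟩⟩

lemma Vt_ne_zero (ε : Vt) (i : Fin 4) : ε.1 i ≠ 0 := by
  rcases ε.2.1 i with h | h <;> rw [h] <;> norm_num

lemma gfun_bij : Function.Bijective gfun := by
  constructor
  · rintro ⟨σ, ε⟩ ⟨τ, δ⟩ h
    have hm : smat σ ε.1 = smat τ δ.1 := congrArg (fun x => (x : L).1.1) h
    have key : ∀ i, σ i = τ i ∧ ε.1 i = δ.1 i := by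
      intro i
      have h1 : smat σ ε.1 i (σ i) = smat τ δ.1 i (σ i) := by rw [hm]
      simp only [smat, Matrix.of_apply, if_pos rfl] at h1
      by_cases hc : σ i = τ i
      · refine ⟨hc, ?_⟩
        rw [if_pos hc] at h1
        exact h1
      · rw [if_neg hc] at h1
        exact absurd h1 (Vt_ne_zero ε i)
    have hσ : σ = τ := Equiv.ext fun i => (key i).1
    have hε : ε = δ := Subtype.ext (funext fun i => (key i).2)
    rw [Prod.ext_iff]
    exact ⟨hσ, hε⟩
  · rintro ⟨A, hAL⟩
    obtain ⟨σ, ε, hε, hπ, hA⟩ := L_le_K hAL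
    refine ⟨(σ, ⟨ε, hε, hπ⟩), ?_⟩
    apply Subtype.ext
    apply Units.ext
    show smat σ ε = A.val
    ext i j
    rw [hA i j]
    rfl

def sgn (b : Bool) : ℚ := if b then 1 else -1

lemma sgn_sq (b : Bool) : sgn b * sgn b = 1 := by cases b <;> norm_num [sgn]

def VtEquiv : Vt ≃ Bool × Bool × Bool where
  toFun ε := (decide (ε.1 0 = 1), decide (ε.1 1 = 1), decide (ε.1 2 = 1))
  invFun p := ⟨![sgn p.1, sgn p.2.1, sgn p.2.2, sgn p.1 * sgn p.2.1 * sgn p.2.2],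
    by
      constructor
      · intro i
        fin_cases i <;> rcases p with ⟨a, b, c⟩ <;>
          cases a <;> cases b <;> cases c <;> norm_num [sgn]
      · rcases p with ⟨a, b, c⟩
        cases a <;> cases b <;> cases c <;> norm_num [sgn] <;> simp⟩
  left_inv := by
    rintro ⟨ε, h1, h2⟩
    apply Subtype.ext
    funext i
    have e3 : ε 0 * ε 1 * ε 2 = ε 3 := by
      have hs := h1
      rcases hs 0 with ha | ha <;> rcases hs 1 with hb | hb <;> rcases hs 2 with hc | hc <;>
        rcases hs 3 with hd | hd <;> rw [ha, hb, hc, hd] at h2 ⊢ <;> norm_num at *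
    fin_cases i
    · show sgn (decide (ε 0 = 1)) = ε 0
      rcases h1 0 with h | h <;> rw [h] <;> norm_num [sgn]
    · show sgn (decide (ε 1 = 1)) = ε 1
      rcases h1 1 with h | h <;> rw [h] <;> norm_num [sgn]
    · show sgn (decide (ε 2 = 1)) = ε 2
      rcases h1 2 with h | h <;> rw [h] <;> norm_num [sgn]
    · show sgn (decide (ε 0 = 1)) * sgn (decide (ε 1 = 1)) * sgn (decide (ε 2 = 1)) = ε 3
      rw [← e3]
      rcases h1 0 with h | h <;> rw [h] <;> rcases h1 1 with h' | h' <;> rw [h'] <;>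
        rcases h1 2 with h'' | h'' <;> rw [h''] <;> norm_num [sgn]
  right_inv := by
    rintro ⟨a, b, c⟩
    cases a <;> cases b <;> cases c <;> simp [sgn] <;> norm_num

theorem toricCode_logical_operators_aux :
    (∀ A : GL (Fin 4) ℚ, A ∈ L ↔
      ∃ (σ : Equiv.Perm (Fin 4)) (ε : Fin 4 → ℚ),
        (∀ i, ε i = 1 ∨ ε i = -1) ∧
        ε 0 * ε 1 * ε 2 * ε 3 = 1 ∧
        (∀ i j, (A : Matrix (Fin 4) (Fin 4) ℚ) i j = if j = σ i then ε i else 0)) ∧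
    Nat.card L = 192 := by
  refine ⟨mem_L_iff, ?_⟩
  have h1 : Nat.card (Equiv.Perm (Fin 4) × Vt) = Nat.card L :=
    Nat.card_eq_of_bijective gfun gfun_bij
  rw [← h1, Nat.card_prod]
  have h2 : Nat.card Vt = 8 := by
    rw [Nat.card_congr VtEquiv]
    simp [Nat.card_eq_fintype_card]
  have h3 : Nat.card (Equiv.Perm (Fin 4)) = 24 := by
    rw [Nat.card_eq_fintype_card, Fintype.card_perm]
    simp [Nat.factorial]
  rw [h2, h3]

/-- `L` is exactly the group of 4×4 signed permutation matrices with an even number of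
`−1` entries; in particular it has order 192. -/
theorem toricCode_logical_operators :
    (∀ A : GL (Fin 4) ℚ, A ∈ L ↔
      ∃ (σ : Equiv.Perm (Fin 4)) (ε : Fin 4 → ℚ),
        (∀ i, ε i = 1 ∨ ε i = -1) ∧
        ε 0 * ε 1 * ε 2 * ε 3 = 1 ∧
        (∀ i j, (A : Matrix (Fin 4) (Fin 4) ℚ) i j = if j = σ i then ε i else 0)) ∧
    Nat.card L = 192 := by
  exact toricCode_logical_operators_aux
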